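/- Let G be a 3-regular finite simple undirected graph and let Δ₁, …, Δ_k be an inclusion-wise maximal collection of pairwise node-disjoint triangles in G. Let G' be the (multi)graph obtained from G by contracting each Δ_i to a single node. If x' is a perfect basic 2-matching of G' whose support contains no pair of parallel edges, then G has a perfect triangle-free 2-matching; moreover x' can be expanded to such a 2-matching x of G by, at each contracted node, either completing an incident double edge of x' with a double edge on the remaining two nodes of the triangle, or lengthening an odd circuit of x' through the contracted node by two edges of the triangle. -/

import Mathlib

open scoped Classical

namespace TF

noncomputable section

variable {V : Type*} {W : Type*}

/-- `x` is a 2-matching of `G`: values in `{0,1,2}`, supported on edges,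
and the total value on edges incident to each node is at most 2. -/
def IsTwoMatching [Fintype V] (G : SimpleGraph V) (x : Sym2 V → ℕ) : Prop :=
  (∀ e, x e ≠ 0 → e ∈ G.edgeSet) ∧ (∀ e, x e ≤ 2) ∧
  (∀ v : V, ∑ e ∈ Finset.univ.filter (fun e : Sym2 V => v ∈ e), x e ≤ 2)

/-- The size of a 2-matching. -/
def size [Fintype V] (x : Sym2 V → ℕ) : ℕ := ∑ e : Sym2 V, x e

/-- A set of edges contains a triangle. -/
def HasTriangle (s : Set (Sym2 V)) : Prop :=
  ∃ a b c : V, a ≠ b ∧ a ≠ c ∧ b ≠ c ∧ s(a, b) ∈ s ∧ s(a, c) ∈ s ∧ s(b, c) ∈ s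

/-- A 2-matching is triangle-free if its support contains no triangle. -/
def IsTriangleFree (x : Sym2 V → ℕ) : Prop := ¬ HasTriangle {e | x e ≠ 0}

/-- `ν₂(G)`: the maximum size of a 2-matching of `G`. -/
def nu2 [Fintype V] (G : SimpleGraph V) : ℕ :=
  sSup {k | ∃ x, IsTwoMatching G x ∧ size x = k}

/-- `ν₂³(G)`: the maximum size of a triangle-free 2-matching of `G`. -/
def nu23 [Fintype V] (G : SimpleGraph V) : ℕ :=
  sSup {k | ∃ x, IsTwoMatching G x ∧ IsTriangleFree x ∧ size x = k}

/-- The number of isolated nodes of a graph. -/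
def isolatedCount (H : SimpleGraph W) : ℕ :=
  Nat.card {v : W // ∀ w, ¬ H.Adj v w}

/-- `v` is a cut vertex (articulation point) of `H`. -/
def IsCutVertex (H : SimpleGraph W) (v : W) : Prop :=
  H.Connected ∧ ¬ (H.induce {w | w ≠ v}).Connected

/-- `H` is a triangle cluster, witnessed by the collection `T` of (vertex sets of) triangles:
`H` is connected, the edges of `H` partition into the triangles of `T`, any two triangles
of `T` share at most one node, and any such shared node is a cut vertex of `H`. -/
def IsTriangleClusterWith (H : SimpleGraph W) (T : Set (Finset W)) : Prop :=
  H.Connected ∧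
  (∀ t ∈ T, t.card = 3 ∧ ∀ u ∈ t, ∀ v ∈ t, u ≠ v → H.Adj u v) ∧
  (∀ u v : W, H.Adj u v → ∃! t, t ∈ T ∧ u ∈ t ∧ v ∈ t) ∧
  (∀ t₁ ∈ T, ∀ t₂ ∈ T, t₁ ≠ t₂ → (t₁ ∩ t₂).card ≤ 1) ∧
  (∀ t₁ ∈ T, ∀ t₂ ∈ T, t₁ ≠ t₂ → ∀ v ∈ t₁ ∩ t₂, IsCutVertex H v)

/-- `H` is a triangle cluster. -/
def IsTriangleCluster (H : SimpleGraph W) : Prop :=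
  ∃ T : Set (Finset W), IsTriangleClusterWith H T

/-- The number of connected components of `H` that are triangle clusters. -/
def clusterCount (H : SimpleGraph W) : ℕ :=
  Nat.card {c : H.ConnectedComponent // IsTriangleCluster (H.induce c.supp)}

/-- The number of connected components of `H` with an odd number of nodes. -/
def oddComponentCount (H : SimpleGraph W) : ℕ :=
  Nat.card {c : H.ConnectedComponent // Odd (Nat.card c.supp)}

/-- A graph is factor-critical if deleting any single node leaves a graph
with a perfect matching. -/
def IsFactorCritical (G : SimpleGraph V) : Prop :=
  ∀ v : V, ∃ M : (G.induce {w | w ≠ v}).Subgraph, M.IsPerfectMatching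

/-- `M` is a maximum(-size) matching of `G`. -/
def IsMaximumMatching (G : SimpleGraph V) (M : G.Subgraph) : Prop :=
  M.IsMatching ∧ ∀ M' : G.Subgraph, M'.IsMatching → M'.edgeSet.ncard ≤ M.edgeSet.ncard

/-- `ν(G)`: the maximum size of a matching of `G`. -/
def matchingNumber [Fintype V] (G : SimpleGraph V) : ℕ :=
  sSup {k | ∃ M : G.Subgraph, M.IsMatching ∧ M.edgeSet.ncard = k}

/-- A 2-matching is basic if the set of edges of value 1 partitions into a collection
of node-disjoint circuits of odd length. -/
def IsBasic (G : SimpleGraph V) (x : Sym2 V → ℕ) : Prop :=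
  ∃ C : Set (Σ v : V, G.Walk v v),
    (∀ c ∈ C, c.2.IsCycle ∧ Odd c.2.length) ∧
    (∀ c₁ ∈ C, ∀ c₂ ∈ C, c₁ ≠ c₂ →
      Disjoint {v | v ∈ c₁.2.support} {v | v ∈ c₂.2.support}) ∧
    {e | x e = 1} = ⋃ c ∈ C, {e | e ∈ c.2.edges}

/-- `F` is (the edge set of) a 2-regular spanning subgraph of `G`. -/
def IsTwoRegularSpanning (G : SimpleGraph V) (F : Set (Sym2 V)) : Prop :=
  F ⊆ G.edgeSet ∧ ∀ v : V, {e ∈ F | v ∈ e}.ncard = 2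

lemma sum_edges_lift [Fintype V] (g : V → V → ℕ)
    (hs : ∀ u v, g u v = g v u) (v : V) :
    ∑ e ∈ Finset.univ.filter (fun e : Sym2 V => v ∈ e), Sym2.lift ⟨g, hs⟩ e
      = ∑ q, g v q := by
  refine (Finset.sum_bij' (fun e he => Sym2.Mem.other (Finset.mem_filter.mp he).2)
    (fun q _ => s(v, q)) ?_ ?_ ?_ ?_ ?_).symm.symm
  · intro e he; exact Finset.mem_univ _
  · intro q _; simp [Sym2.mem_iff]
  · intro e he
    exact Sym2.other_spec (Finset.mem_filter.mp he).2
  · intro q _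
    have := Sym2.other_spec (Finset.mem_filter.mp
      (by simp [Sym2.mem_iff] : s(v,q) ∈ Finset.univ.filter (fun e : Sym2 V => v ∈ e))).2
    exact Sym2.congr_right.mp this
  · intro e he
    conv_lhs => rw [← Sym2.other_spec (Finset.mem_filter.mp he).2]
    rw [Sym2.lift_mk]

lemma handshake [Fintype V] (x : Sym2 V → ℕ)
    (hd : ∀ v : V, x s(v, v) = 0) :
    ∑ v : V, ∑ e ∈ Finset.univ.filter (fun e : Sym2 V => v ∈ e), x e
      = 2 * ∑ e : Sym2 V, x e := by
  have h1 : ∀ v : V, ∑ e ∈ Finset.univ.filter (fun e : Sym2 V => v ∈ e), x e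
      = ∑ e : Sym2 V, if v ∈ e then x e else 0 := fun v => (Finset.sum_filter _ _)
  simp only [h1]
  rw [Finset.sum_comm]
  rw [Finset.mul_sum]
  refine Finset.sum_congr rfl fun e _ => ?_
  induction e using Sym2.ind with
  | _ a b =>
    by_cases hab : a = b
    · subst hab; simp [hd a]
    · have : ∀ v : V, (if v ∈ s(a,b) then x s(a,b) else 0)
          = if v ∈ ({a,b} : Finset V) then x s(a,b) else 0 := by
        intro v; simp [Sym2.mem_iff]
      simp only [this]
      rw [Finset.sum_ite_mem, Finset.univ_inter, Finset.sum_const, Finset.card_pair hab]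
      simp [two_mul, two_nsmul]

theorem stmt18 [Fintype V] [Fintype W] (G : SimpleGraph V) (G' : SimpleGraph W)
    (hreg : G.IsRegularOfDegree 3)
    (k : ℕ) (Δ : Fin k → Finset V)
    (htri : ∀ i, (Δ i).card = 3 ∧ ∀ u ∈ Δ i, ∀ v ∈ Δ i, u ≠ v → G.Adj u v)
    (hdisj : ∀ i j, i ≠ j → Disjoint (Δ i) (Δ j))
    (hmax : ∀ a b c : V, G.Adj a b → G.Adj b c → G.Adj a c →
      ∃ i, ¬ Disjoint ({a, b, c} : Finset V) (Δ i))
    (f : V → W) (hsurj : Function.Surjective f)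
    (hfibΔ : ∀ i, ∃ w, ∀ v, f v = w ↔ v ∈ Δ i)
    (hfib : ∀ w : W, (∃ i, ∀ v, f v = w ↔ v ∈ Δ i) ∨ (∃! v, f v = w))
    (hG' : ∀ a b : W, G'.Adj a b ↔ (a ≠ b ∧ ∃ u v : V, G.Adj u v ∧ f u = a ∧ f v = b))
    (x' : Sym2 W → ℕ)
    (hx' : IsTwoMatching G' x') (hperf : size x' = Fintype.card W)
    (hbasic : IsBasic G' x')
    (hnopar : ∀ a b : W, x' s(a, b) ≠ 0 →
      ∀ u₁ v₁ u₂ v₂ : V, G.Adj u₁ v₁ → G.Adj u₂ v₂ →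
        f u₁ = a → f v₁ = b → f u₂ = a → f v₂ = b → s(u₁, v₁) = s(u₂, v₂)) :
    ∃ x : Sym2 V → ℕ, IsTwoMatching G x ∧ IsTriangleFree x ∧
      size x = Fintype.card V ∧
      ∀ u v : V, G.Adj u v → f u ≠ f v → x s(u, v) ≠ 0 →
        x s(u, v) = x' s(f u, f v) := by
  classical
  obtain ⟨hsupp', hle2', hdeg'⟩ := hx'
  -- x' vanishes on diagonal
  have hx'diag : ∀ w : W, x' s(w, w) = 0 := by
    intro w
    by_contra h
    exact G'.irrefl (G'.mem_edgeSet.mp (hsupp' _ h))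
  have hx'symm : ∀ a b : W, x' s(a, b) = x' s(b, a) := by
    intro a b; rw [Sym2.eq_swap]
  have hx'lift : x' = Sym2.lift ⟨fun a b => x' s(a, b), hx'symm⟩ := by
    funext e
    induction e using Sym2.ind with
    | _ a b => rw [Sym2.lift_mk]
  have hkey' : ∀ w : W, ∑ e ∈ Finset.univ.filter (fun e : Sym2 W => w ∈ e), x' e
      = ∑ u : W, x' s(w, u) := by
    intro w
    conv_lhs => rw [hx'lift]
    exact sum_edges_lift _ hx'symm w
  -- every node of G' is saturated
  have hinc' : ∀ w : W, ∑ u : W, x' s(w, u) = 2 := by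
    have hts : ∑ w : W, ∑ u : W, x' s(w, u) = 2 * Fintype.card W := by
      have hh := handshake x' hx'diag
      have : (∑ e : Sym2 W, x' e) = Fintype.card W := hperf
      rw [this] at hh
      calc ∑ w : W, ∑ u : W, x' s(w, u)
          = ∑ w : W, ∑ e ∈ Finset.univ.filter (fun e : Sym2 W => w ∈ e), x' e :=
            Finset.sum_congr rfl fun w _ => (hkey' w).symm
        _ = 2 * Fintype.card W := hh
    have hle : ∀ w : W, ∑ u : W, x' s(w, u) ≤ 2 := by
      intro w; rw [← hkey' w]; exact hdeg' w
    intro w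
    by_contra h
    have hlt : ∑ u : W, x' s(w, u) < 2 := lt_of_le_of_ne (hle w) h
    have : ∑ w : W, ∑ u : W, x' s(w, u) < ∑ _w : W, 2 :=
      Finset.sum_lt_sum (fun i _ => hle i) ⟨w, Finset.mem_univ w, hlt⟩
    rw [hts, Finset.sum_const, Finset.card_univ, smul_eq_mul] at this
    omega
  -- the external value at each vertex of V
  set ext : V → ℕ := fun p =>
    ∑ q ∈ Finset.univ.filter (fun q => G.Adj p q ∧ f p ≠ f q), x' s(f p, f q) with hextdef
  -- the expanded 2-matching, as a symmetric function
  set g : V → V → ℕ := fun u v =>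
    if G.Adj u v then (if f u = f v then 2 - (ext u + ext v) else x' s(f u, f v))
    else 0 with hgdef
  have hgval : ∀ u v, g u v =
      if G.Adj u v then (if f u = f v then 2 - (ext u + ext v) else x' s(f u, f v))
      else 0 := fun u v => by rw [hgdef]
  have hgsymm : ∀ u v, g u v = g v u := by
    intro u v
    rw [hgval, hgval]
    by_cases h : G.Adj u v
    · have h' : G.Adj v u := h.symm
      rw [if_pos h, if_pos h']
      by_cases h2 : f u = f v
      · rw [if_pos h2, if_pos h2.symm, Nat.add_comm]
      · rw [if_neg h2, if_neg (Ne.symm h2), Sym2.eq_swap]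
    · have h' : ¬ G.Adj v u := fun hh => h hh.symm
      rw [if_neg h, if_neg h']
  -- sum of ext over each fiber is 2
  have hextsum : ∀ w : W,
      ∑ p ∈ Finset.univ.filter (fun p => f p = w), ext p = 2 := by
    intro w
    rw [← hinc' w]
    have step1 : ∑ p ∈ Finset.univ.filter (fun p => f p = w), ext p
        = ∑ pq ∈ (Finset.univ ×ˢ Finset.univ).filter
            (fun pq : V × V => f pq.1 = w ∧ G.Adj pq.1 pq.2 ∧ f pq.2 ≠ w),
            x' s(w, f pq.2) := by
      rw [Finset.sum_finset_product _ _
        (fun p => Finset.univ.filter (fun q => G.Adj p q ∧ f p ≠ f q)) ?_]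
      · refine Finset.sum_congr rfl fun p hp => ?_
        have hpw : f p = w := (Finset.mem_filter.mp hp).2
        rw [hextdef]
        exact Finset.sum_congr rfl fun q hq => by rw [hpw]
      · intro pq
        simp only [Finset.mem_filter, Finset.mem_product, Finset.mem_univ, true_and]
        constructor
        · rintro ⟨h1, h2, h3⟩
          exact ⟨h1, h2, fun hh => h3 (hh.symm.trans h1)⟩
        · rintro ⟨h1, h2, h3⟩
          exact ⟨h1, h2, fun hh => h3 (h1.trans hh.symm)⟩
    rw [step1]
    rw [← Finset.sum_filter_ne_zero
      ((Finset.univ ×ˢ Finset.univ).filter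
        (fun pq : V × V => f pq.1 = w ∧ G.Adj pq.1 pq.2 ∧ f pq.2 ≠ w))
      (f := fun pq : V × V => x' s(w, f pq.2))]
    rw [← Finset.sum_filter_ne_zero Finset.univ (f := fun u : W => x' s(w, u))]
    refine Finset.sum_bij (fun pq _ => f pq.2) ?_ ?_ ?_ ?_
    · intro pq hpq
      simp only [Finset.mem_filter] at hpq ⊢
      exact ⟨Finset.mem_univ _, hpq.2⟩
    · rintro ⟨p₁, q₁⟩ h₁ ⟨p₂, q₂⟩ h₂ heq
      simp only [Finset.mem_filter, Finset.mem_product, Finset.mem_univ, true_and] at h₁ h₂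
      obtain ⟨⟨hp₁, hadj₁, hq₁⟩, hne₁⟩ := h₁
      obtain ⟨⟨hp₂, hadj₂, hq₂⟩, hne₂⟩ := h₂
      have heq' : s(p₁, q₁) = s(p₂, q₂) :=
        hnopar w (f q₁) hne₁ p₁ q₁ p₂ q₂ hadj₁ hadj₂ hp₁ rfl hp₂ heq.symm
      rcases Sym2.eq_iff.mp heq' with ⟨h1, h2⟩ | ⟨h1, h2⟩
      · simp [h1, h2]
      · exact absurd (by rw [← h1]; exact hp₁) hq₂
    · intro u hu
      simp only [Finset.mem_filter, Finset.mem_univ, true_and] at hu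
      have hadj : G'.Adj w u := G'.mem_edgeSet.mp (hsupp' _ hu)
      obtain ⟨hwu, p, q, hpq, hp, hq⟩ := (hG' w u).mp hadj
      refine ⟨(p, q), ?_, hq⟩
      simp only [Finset.mem_filter, Finset.mem_product, Finset.mem_univ, true_and]
      exact ⟨⟨hp, hpq, by rw [hq]; exact fun hh => hwu hh.symm⟩, by rw [hq]; exact hu⟩
    · intro pq _; rfl
  -- degree of the expansion at every vertex is exactly 2
  have hsplit : ∀ v : V, ∑ q : V, g v q
      = ext v + ∑ q ∈ Finset.univ.filter (fun q => G.Adj v q ∧ f v = f q),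
          (2 - (ext v + ext q)) := by
    intro v
    have hterm : ∀ q : V, g v q =
        (if G.Adj v q ∧ f v ≠ f q then x' s(f v, f q) else 0)
        + (if G.Adj v q ∧ f v = f q then 2 - (ext v + ext q) else 0) := by
      intro q
      rw [hgval]
      by_cases h : G.Adj v q
      · by_cases h2 : f v = f q
        · simp [h, h2]
        · simp [h, h2]
      · simp [h]
    simp only [hterm]
    rw [Finset.sum_add_distrib]
    congr 1
    · rw [hextdef]
      exact (Finset.sum_filter _ _).symm
    · exact (Finset.sum_filter _ _).symm
  have hdeg : ∀ v : V, ∑ q : V, g v q = 2 := by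
    intro v
    rcases hfib (f v) with ⟨i, hi⟩ | ⟨u, hu, huniq⟩
    · -- triangle fiber
      have hvΔ : v ∈ Δ i := (hi v).mp rfl
      obtain ⟨a, b, c, hab, hac, hbc, hΔ⟩ := Finset.card_eq_three.mp (htri i).1
      have hkey2 : ∀ p q : V, v ≠ p → v ≠ q → p ≠ q → Δ i = {v, p, q}
          → ∑ q' : V, g v q' = 2 := by
        intro p q hvp hvq hpq hΔ'
        have hpΔ : p ∈ Δ i := by rw [hΔ']; simp
        have hqΔ : q ∈ Δ i := by rw [hΔ']; simp
        have hvΔ' : v ∈ Δ i := by rw [hΔ']; simp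
        have hadjvp : G.Adj v p := (htri i).2 v hvΔ' p hpΔ hvp
        have hadjvq : G.Adj v q := (htri i).2 v hvΔ' q hqΔ hvq
        have hI : Finset.univ.filter (fun q' => G.Adj v q' ∧ f v = f q')
            = ({p, q} : Finset V) := by
          ext r
          simp only [Finset.mem_filter, Finset.mem_univ, true_and,
            Finset.mem_insert, Finset.mem_singleton]
          constructor
          · rintro ⟨hadj, heq⟩
            have hr : r ∈ Δ i := (hi r).mp heq.symm
            rw [hΔ'] at hr
            simp only [Finset.mem_insert, Finset.mem_singleton] at hr
            rcases hr with rfl | hr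
            · exact absurd hadj (G.loopless.irrefl r)
            · exact hr
          · rintro (rfl | rfl)
            · exact ⟨hadjvp, ((hi r).mpr hpΔ).symm⟩
            · exact ⟨hadjvq, ((hi r).mpr hqΔ).symm⟩
        have hfib' : Finset.univ.filter (fun p' => f p' = f v) = Δ i := by
          ext r
          simp only [Finset.mem_filter, Finset.mem_univ, true_and]
          exact hi r
        have hsum3 : ext v + ext p + ext q = 2 := by
          have h2 := hextsum (f v)
          rw [hfib', hΔ'] at h2
          rw [Finset.sum_insert (by simp [hvp, hvq]),
            Finset.sum_insert (by simp [hpq]), Finset.sum_singleton] at h2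
          omega
        rw [hsplit v, hI, Finset.sum_pair hpq]
        omega
      rw [hΔ] at hvΔ
      simp only [Finset.mem_insert, Finset.mem_singleton] at hvΔ
      rcases hvΔ with rfl | rfl | rfl
      · exact hkey2 b c hab hac hbc hΔ
      · refine hkey2 a c (Ne.symm hab) hbc hac ?_
        rw [hΔ]; ext r; simp only [Finset.mem_insert, Finset.mem_singleton]; tauto
      · refine hkey2 a b (Ne.symm hac) (Ne.symm hbc) hab ?_
        rw [hΔ]; ext r; simp only [Finset.mem_insert, Finset.mem_singleton]; tauto
    · -- singleton fiber
      have hvu : v = u := huniq v rfl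
      have hI : Finset.univ.filter (fun q => G.Adj v q ∧ f v = f q)
          = (∅ : Finset V) := by
        ext r
        simp only [Finset.mem_filter, Finset.mem_univ, true_and,
          Finset.notMem_empty, iff_false, not_and]
        intro hadj heq
        have hru : r = u := huniq r heq.symm
        have hrv : r = v := hru.trans hvu.symm
        rw [hrv] at hadj
        exact G.loopless.irrefl v hadj
      have hfib' : Finset.univ.filter (fun p => f p = f v) = ({v} : Finset V) := by
        ext r
        simp only [Finset.mem_filter, Finset.mem_univ, true_and, Finset.mem_singleton]
        constructor
        · intro h; rw [huniq r h, ← hvu]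
        · rintro rfl; rfl
      have hev : ext v = 2 := by
        have h2 := hextsum (f v)
        rw [hfib', Finset.sum_singleton] at h2
        exact h2
      rw [hsplit v, hI, Finset.sum_empty, hev]
      omega
  -- adjacency from support
  have hadj_of_ne : ∀ u v : V, g u v ≠ 0 → G.Adj u v := by
    intro u v h
    by_contra hna
    rw [hgval] at h
    simp [hna] at h
  -- the result
  refine ⟨Sym2.lift ⟨g, hgsymm⟩, ⟨?_, ?_, ?_⟩, ?_, ?_, ?_⟩
  · -- supported on edges
    intro e he
    induction e using Sym2.ind with
    | _ a b =>
      rw [Sym2.lift_mk] at he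
      exact G.mem_edgeSet.mpr (hadj_of_ne a b he)
  · -- values ≤ 2
    intro e
    induction e using Sym2.ind with
    | _ a b =>
      simp only [Sym2.lift_mk]
      rw [hgval]
      split_ifs with h1 h2
      · exact Nat.sub_le _ _
      · exact hle2' _
      · omega
  · -- degree ≤ 2
    intro v
    rw [sum_edges_lift g hgsymm v, hdeg v]
  · -- triangle free
    rintro ⟨a, b, c, hab, hac, hbc, h1, h2, h3⟩
    simp only [Set.mem_setOf_eq, Sym2.lift_mk] at h1 h2 h3
    have hAab : G.Adj a b := hadj_of_ne _ _ h1
    have hAac : G.Adj a c := hadj_of_ne _ _ h2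
    have hAbc : G.Adj b c := hadj_of_ne _ _ h3
    have hcross : ∀ u₁ v₁ u₂ v₂ : V, G.Adj u₁ v₁ → G.Adj u₂ v₂ → f u₁ = f u₂ →
        f v₁ = f v₂ → f u₁ ≠ f v₁ → g u₁ v₁ ≠ 0 → s(u₁, v₁) = s(u₂, v₂) := by
      intro u₁ v₁ u₂ v₂ ha1 ha2 he1 he2 hne h0
      have hval : g u₁ v₁ = x' s(f u₁, f v₁) := by
        rw [hgval]; simp [ha1, hne]
      exact hnopar (f u₁) (f v₁) (hval ▸ h0) u₁ v₁ u₂ v₂ ha1 ha2 rfl rfl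
        he1.symm he2.symm
    by_cases h1e : f a = f b
    · by_cases h2e : f a = f c
      · -- all in the same fiber
        rcases hfib (f a) with ⟨i, hi⟩ | ⟨u, hu, huniq⟩
        · have haΔ : a ∈ Δ i := (hi a).mp rfl
          have hbΔ : b ∈ Δ i := (hi b).mp h1e.symm
          have hcΔ : c ∈ Δ i := (hi c).mp h2e.symm
          have hsub : ({a, b, c} : Finset V) ⊆ Δ i := by
            intro r hr
            simp only [Finset.mem_insert, Finset.mem_singleton] at hr
            rcases hr with rfl | rfl | rfl <;> assumption
          have hcard3 : ({a, b, c} : Finset V).card = 3 :=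
            Finset.card_eq_three.mpr ⟨a, b, c, hab, hac, hbc, rfl⟩
          have hΔeq : Δ i = ({a, b, c} : Finset V) :=
            (Finset.eq_of_subset_of_card_le hsub (by rw [hcard3, (htri i).1])).symm
          have hfib' : Finset.univ.filter (fun p => f p = f a) = Δ i := by
            ext r
            simp only [Finset.mem_filter, Finset.mem_univ, true_and]
            exact hi r
          have hsum3 : ext a + ext b + ext c = 2 := by
            have h4 := hextsum (f a)
            rw [hfib', hΔeq] at h4
            rw [Finset.sum_insert (by simp [hab, hac]),
              Finset.sum_insert (by simp [hbc]), Finset.sum_singleton] at h4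
            omega
          have v1 : g a b = 2 - (ext a + ext b) := by rw [hgval]; simp [hAab, h1e]
          have v2 : g a c = 2 - (ext a + ext c) := by rw [hgval]; simp [hAac, h2e]
          have v3 : g b c = 2 - (ext b + ext c) := by
            rw [hgval]; simp [hAbc, h1e.symm.trans h2e]
          rw [v1] at h1; rw [v2] at h2; rw [v3] at h3
          omega
        · exact hab ((huniq a rfl).trans (huniq b h1e.symm).symm)
      · -- f a = f b, f a ≠ f c
        have := hcross a c b c hAac hAbc h1e rfl h2e h2
        rcases Sym2.eq_iff.mp this with ⟨hh1, _⟩ | ⟨hh1, hh2⟩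
        · exact hab hh1
        · exact hac hh1
    · by_cases h3e : f a = f c
      · have := hcross a b c b hAab hAbc.symm h3e rfl h1e h1
        rcases Sym2.eq_iff.mp this with ⟨hh1, _⟩ | ⟨hh1, hh2⟩
        · exact hac hh1
        · exact hab hh1
      · by_cases h4e : f b = f c
        · have := hcross a b a c hAab hAac rfl h4e h1e h1
          rcases Sym2.eq_iff.mp this with ⟨_, hh2⟩ | ⟨hh1, _⟩
          · exact hbc hh2
          · exact hac hh1
        · -- images pairwise distinct : use maximality of triangle family
          obtain ⟨i, hnd⟩ := hmax a b c hAab hAbc hAac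
          rw [Finset.not_disjoint_iff] at hnd
          obtain ⟨v, hv1, hv2⟩ := hnd
          obtain ⟨w, hw⟩ := hfibΔ i
          have hfalse : ∀ p r s : V, p ∈ Δ i → G.Adj p r → G.Adj p s → r ≠ s →
              f r ≠ f p → f s ≠ f p → False := by
            intro p r s hp hpr hps hrs hfr hfs
            obtain ⟨a', b', c', h1', h2', h3', hΔ'⟩ :=
              Finset.card_eq_three.mp (htri i).1
            obtain ⟨y, z, hyz, hy, hz, hpy, hpz⟩ :
                ∃ y z, y ≠ z ∧ y ∈ Δ i ∧ z ∈ Δ i ∧ p ≠ y ∧ p ≠ z := by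
              have hp' : p = a' ∨ p = b' ∨ p = c' := by
                rw [hΔ'] at hp
                simpa using hp
              rcases hp' with rfl | rfl | rfl
              · exact ⟨b', c', h3', by rw [hΔ']; simp, by rw [hΔ']; simp, h1', h2'⟩
              · exact ⟨a', c', h2', by rw [hΔ']; simp, by rw [hΔ']; simp,
                  Ne.symm h1', h3'⟩
              · exact ⟨a', b', h1', by rw [hΔ']; simp, by rw [hΔ']; simp,
                  Ne.symm h2', Ne.symm h3'⟩
            have hfy : f y = f p := by rw [(hw y).mpr hy, (hw p).mpr hp]
            have hfz : f z = f p := by rw [(hw z).mpr hz, (hw p).mpr hp]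
            have hry : r ≠ y := fun hh => hfr (hh ▸ hfy)
            have hrz : r ≠ z := fun hh => hfr (hh ▸ hfz)
            have hsy : s ≠ y := fun hh => hfs (hh ▸ hfy)
            have hsz : s ≠ z := fun hh => hfs (hh ▸ hfz)
            have hsub : ({r, s, y, z} : Finset V) ⊆ G.neighborFinset p := by
              intro t ht
              simp only [Finset.mem_insert, Finset.mem_singleton] at ht
              rw [SimpleGraph.mem_neighborFinset]
              rcases ht with rfl | rfl | rfl | rfl
              · exact hpr
              · exact hps
              · exact (htri i).2 p hp t hy hpy
              · exact (htri i).2 p hp t hz hpz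
            have hcard4 : ({r, s, y, z} : Finset V).card = 4 := by
              rw [Finset.card_insert_of_notMem (by simp [hrs, hry, hrz]),
                Finset.card_insert_of_notMem (by simp [hsy, hsz]),
                Finset.card_insert_of_notMem (by simp [hyz]),
                Finset.card_singleton]
            have hle := Finset.card_le_card hsub
            rw [hcard4, SimpleGraph.card_neighborFinset_eq_degree, hreg p] at hle
            omega
          simp only [Finset.mem_insert, Finset.mem_singleton] at hv1
          rcases hv1 with rfl | rfl | rfl
          · exact hfalse v b c hv2 hAab hAac hbc (Ne.symm h1e) (Ne.symm h3e)
          · exact hfalse v a c hv2 hAab.symm hAbc hac h1e (Ne.symm h4e)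
          · exact hfalse v a b hv2 hAac.symm hAbc.symm hab h3e h4e
  · -- size
    have hdiag0 : ∀ v : V, Sym2.lift ⟨g, hgsymm⟩ s(v, v) = 0 := by
      intro v
      simp only [Sym2.lift_mk]
      rw [hgval]
      simp
    have hh := handshake (Sym2.lift ⟨g, hgsymm⟩) hdiag0
    have hl : ∑ v : V, ∑ e ∈ Finset.univ.filter (fun e : Sym2 V => v ∈ e),
        Sym2.lift ⟨g, hgsymm⟩ e = 2 * Fintype.card V := by
      calc ∑ v : V, ∑ e ∈ Finset.univ.filter (fun e : Sym2 V => v ∈ e),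
            Sym2.lift ⟨g, hgsymm⟩ e
          = ∑ _v : V, 2 := Finset.sum_congr rfl fun v _ => by
            rw [sum_edges_lift g hgsymm v, hdeg v]
        _ = 2 * Fintype.card V := by
            rw [Finset.sum_const, Finset.card_univ, smul_eq_mul, Nat.mul_comm]
    rw [hl] at hh
    have : (size (Sym2.lift ⟨g, hgsymm⟩) : ℕ) = ∑ e : Sym2 V, Sym2.lift ⟨g, hgsymm⟩ e := rfl
    omega
  · -- agreement with x' on cross edges
    intro u v hadj hne h0
    simp only [Sym2.lift_mk]
    rw [hgval]
    simp [hadj, hne]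



end

end TF
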